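/- arXiv:1506.04660 — 2 statements merged into one kernel-verified Lean document; each statement's English description precedes it below -/
import Mathlib

section
/- Let R be an associative algebra over a commutative ring and T : R → S a linear map with T(xy) = T(yx) for all x, y. Let P, Q ∈ R be such that every product containing Q in three or more positions vanishes (QxQyQ = 0 for all x, y ∈ R). Then for every k ≥ 2: T((P+Q)^{2k}) = T(P^{2k}) + 2k·T(P^{2k−1}Q) + 2k·∑_{l=0}^{k−2} T(P^{2(k−l−1)}(P^lQ)²) + k·T((P^{k−1}Q)²), and T((P+Q)^{2k+1}) = T(P^{2k+1}) + (2k+1)·T(P^{2k}Q) + (2k+1)·∑_{l=0}^{k−1} T(P^{2(k−l)−1}(P^lQ)²). -/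
open Finset

/-- Sum of all words with exactly one `Q` among `P`'s, length `n`. -/
def nkA {R : Type*} [Ring R] (P Q : R) (n : ℕ) : R :=
  ∑ i ∈ Finset.range n, P ^ i * Q * P ^ (n - 1 - i)

/-- Sum of all words with exactly two `Q`'s among `P`'s, length `n`. -/
def nkB {R : Type*} [Ring R] (P Q : R) (n : ℕ) : R :=
  ∑ i ∈ Finset.range (n - 1), P ^ i * Q * nkA P Q (n - 1 - i)

lemma nkA_succ {R : Type*} [Ring R] (P Q : R) (n : ℕ) :
    nkA P Q (n + 1) = nkA P Q n * P + P ^ n * Q := by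
  unfold nkA
  rw [Finset.sum_range_succ, Finset.sum_mul]
  congr 1
  · refine Finset.sum_congr rfl fun i hi => ?_
    rw [Finset.mem_range] at hi
    rw [show n + 1 - 1 - i = (n - 1 - i) + 1 from by omega, pow_succ, ← mul_assoc]
  · simp

lemma nkB_succ {R : Type*} [Ring R] (P Q : R) (n : ℕ) :
    nkB P Q (n + 1) = nkB P Q n * P + nkA P Q n * Q := by
  rcases n with _ | m
  · simp [nkA, nkB]
  · unfold nkB
    rw [show m + 1 + 1 - 1 = m + 1 from rfl, show m + 1 - 1 = m from rfl]
    have h1 : ∀ i ∈ Finset.range (m + 1),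
        P ^ i * Q * nkA P Q (m + 1 - i)
          = P ^ i * Q * nkA P Q (m - i) * P + P ^ i * Q * P ^ (m - i) * Q := by
      intro i hi
      rw [Finset.mem_range] at hi
      rw [show m + 1 - i = (m - i) + 1 from by omega, nkA_succ, mul_add, ← mul_assoc,
        ← mul_assoc]
    rw [Finset.sum_congr rfl h1, Finset.sum_add_distrib]
    congr 1
    · rw [Finset.sum_range_succ, Finset.sum_mul]
      have : nkA P Q (m - m) = 0 := by simp [nkA, show m - m = 0 from by omega]
      rw [this, mul_zero, zero_mul, add_zero]
    · unfold nkA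
      rw [Finset.sum_mul]
      refine Finset.sum_congr rfl fun i hi => ?_
      rw [show m + 1 - 1 - i = m - i from rfl]

lemma nkB_mul_Q {R : Type*} [Ring R] (P Q : R)
    (hQ : ∀ x y : R, Q * x * Q * y * Q = 0) (n : ℕ) :
    nkB P Q n * Q = 0 := by
  unfold nkB nkA
  rw [Finset.sum_mul]
  refine Finset.sum_eq_zero fun i _ => ?_
  rw [Finset.mul_sum, Finset.sum_mul]
  refine Finset.sum_eq_zero fun j _ => ?_
  have h := hQ (P ^ j) (P ^ (n - 1 - i - 1 - j))
  simp only [mul_assoc] at h ⊢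
  rw [h, mul_zero]

lemma nk_expand {R : Type*} [Ring R] (P Q : R)
    (hQ : ∀ x y : R, Q * x * Q * y * Q = 0) (n : ℕ) :
    (P + Q) ^ n = P ^ n + nkA P Q n + nkB P Q n := by
  induction n with
  | zero => simp [nkA, nkB]
  | succ n ih =>
    rw [pow_succ, ih, nkA_succ, nkB_succ, add_mul, add_mul, mul_add, mul_add, mul_add,
      nkB_mul_Q P Q hQ, pow_succ]
    abel

section trace

variable {𝕜 : Type*} [CommRing 𝕜] {R : Type*} [Ring R] [Algebra 𝕜 R]
  {S : Type*} [AddCommGroup S] [Module 𝕜 S]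
  (T : R →ₗ[𝕜] S) (hcyc : ∀ x y : R, T (x * y) = T (y * x)) (P Q : R)

include hcyc

lemma T_nkA (n : ℕ) : T (nkA P Q n) = n • T (P ^ (n - 1) * Q) := by
  unfold nkA
  rw [map_sum]
  have h : ∀ i ∈ Finset.range n, T (P ^ i * Q * P ^ (n - 1 - i)) = T (P ^ (n - 1) * Q) := by
    intro i hi
    rw [Finset.mem_range] at hi
    rw [hcyc (P ^ i * Q) (P ^ (n - 1 - i)), ← mul_assoc, ← pow_add,
      show n - 1 - i + i = n - 1 from by omega]
  rw [Finset.sum_congr rfl h, Finset.sum_const, Finset.card_range]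

lemma T_csym (a b : ℕ) :
    T (P ^ a * Q * (P ^ b * Q)) = T (P ^ b * Q * (P ^ a * Q)) := by
  have h1 := hcyc (P ^ a * Q * P ^ b) Q
  have h2 := hcyc (Q * P ^ a * Q) (P ^ b)
  simp only [← mul_assoc] at h1 h2 ⊢
  rw [h1, h2]

lemma T_nkB (n : ℕ) :
    T (nkB P Q n)
      = ∑ j ∈ Finset.range (n - 1), (n - 1 - j) • T (P ^ (n - 2 - j) * Q * (P ^ j * Q)) := by
  unfold nkB nkA
  rw [map_sum]
  simp only [Finset.mul_sum, map_sum]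
  have key : ∀ i ∈ Finset.range (n - 1), ∀ j ∈ Finset.range (n - 1 - i),
      T (P ^ i * Q * (P ^ j * Q * P ^ (n - 1 - i - 1 - j)))
        = T (P ^ (n - 2 - j) * Q * (P ^ j * Q)) := by
    intro i hi j hj
    rw [Finset.mem_range] at hi hj
    have e1 : P ^ i * Q * (P ^ j * Q * P ^ (n - 1 - i - 1 - j))
        = P ^ i * Q * (P ^ j * Q) * P ^ (n - 2 - i - j) := by
      rw [show n - 1 - i - 1 - j = n - 2 - i - j from by omega, ← mul_assoc]
    have e2 : P ^ (n - 2 - i - j) * (P ^ i * Q * (P ^ j * Q))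
        = P ^ (n - 2 - j) * Q * (P ^ j * Q) := by
      simp only [← mul_assoc, ← pow_add]
      rw [show n - 2 - i - j + i = n - 2 - j from by omega]
    rw [e1, hcyc (P ^ i * Q * (P ^ j * Q)) (P ^ (n - 2 - i - j)), e2]
  rw [Finset.sum_congr rfl fun i hi => Finset.sum_congr rfl (key i hi)]
  rw [Finset.sum_comm' (s' := fun j => Finset.range (n - 1 - j)) (t' := Finset.range (n - 1))
    (by intro i j; simp only [Finset.mem_range]; omega)]
  refine Finset.sum_congr rfl fun j hj => ?_
  rw [Finset.sum_const, Finset.card_range]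

end trace

lemma sum_double {S : Type*} [AddCommMonoid S] (k : ℕ) (g : ℕ → S) :
    ∑ j ∈ Finset.range (k + k), g j = ∑ j ∈ Finset.range k, (g j + g (k + k - 1 - j)) := by
  rw [Finset.sum_range_add, ← Finset.sum_range_reflect (fun j => g (k + j)) k,
    ← Finset.sum_add_distrib]
  refine Finset.sum_congr rfl fun j hj => ?_
  rw [Finset.mem_range] at hj
  rw [show k + (k - 1 - j) = k + k - 1 - j from by omega]

lemma sum_double_succ {S : Type*} [AddCommMonoid S] (k : ℕ) (g : ℕ → S) :
    ∑ j ∈ Finset.range (k + k + 1), g j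
      = ∑ j ∈ Finset.range k, (g j + g (k + k - j)) + g k := by
  rw [show k + k + 1 = k + 1 + k from by omega, Finset.sum_range_add, Finset.sum_range_succ,
    ← Finset.sum_range_reflect (fun j => g (k + 1 + j)) k]
  rw [add_right_comm, ← Finset.sum_add_distrib]
  congr 1
  refine Finset.sum_congr rfl fun j hj => ?_
  rw [Finset.mem_range] at hj
  rw [show k + 1 + (k - 1 - j) = k + k - j from by omega]

/-- Cyclic-word counting for two `Q` insertions (Lemma 2): for a cyclic linear
map `T` and `P, Q` with all products containing three or more `Q`'s vanishing,
the expansions of `T((P+Q)^{2k})` and `T((P+Q)^{2k+1})` for `k ≥ 2` hold. -/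
theorem cyclic_trace_necklace_expansion
    (𝕜 : Type*) [CommRing 𝕜] (R : Type*) [Ring R] [Algebra 𝕜 R]
    (S : Type*) [AddCommGroup S] [Module 𝕜 S]
    (T : R →ₗ[𝕜] S) (hcyc : ∀ x y : R, T (x * y) = T (y * x))
    (P Q : R) (hQ : ∀ x y : R, Q * x * Q * y * Q = 0) :
    ∀ k : ℕ, 2 ≤ k →
      (T ((P + Q) ^ (2 * k)) = T (P ^ (2 * k)) + (2 * k) • T (P ^ (2 * k - 1) * Q)
        + (2 * k) • ∑ l ∈ Finset.range (k - 1), T (P ^ (2 * (k - l - 1)) * (P ^ l * Q) ^ 2)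
        + k • T ((P ^ (k - 1) * Q) ^ 2)) ∧
      (T ((P + Q) ^ (2 * k + 1)) = T (P ^ (2 * k + 1)) + (2 * k + 1) • T (P ^ (2 * k) * Q)
        + (2 * k + 1) • ∑ l ∈ Finset.range k, T (P ^ (2 * (k - l) - 1) * (P ^ l * Q) ^ 2)) := by
  intro k hk
  have hterm : ∀ l, l + 1 ≤ k →
      T (P ^ (2 * (k - l - 1)) * (P ^ l * Q) ^ 2)
        = T (P ^ (2 * k - 2 - l) * Q * (P ^ l * Q)) := by
    intro l hl
    refine congrArg T ?_
    simp only [pow_two, ← mul_assoc]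
    rw [← pow_add, show 2 * (k - l - 1) + l = 2 * k - 2 - l from by omega]
  have hterm2 : ∀ l, l < k →
      T (P ^ (2 * (k - l) - 1) * (P ^ l * Q) ^ 2)
        = T (P ^ (2 * k - 1 - l) * Q * (P ^ l * Q)) := by
    intro l hl
    refine congrArg T ?_
    simp only [pow_two, ← mul_assoc]
    rw [← pow_add, show 2 * (k - l) - 1 + l = 2 * k - 1 - l from by omega]
  constructor
  · -- even case
    have hD := sum_double_succ (k - 1)
      (fun j => (2 * k - 1 - j) • T (P ^ (2 * k - 2 - j) * Q * (P ^ j * Q)))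
    rw [show k - 1 + (k - 1) + 1 = 2 * k - 1 from by omega] at hD
    have hsum : ∑ j ∈ Finset.range (2 * k - 1),
        (2 * k - 1 - j) • T (P ^ (2 * k - 2 - j) * Q * (P ^ j * Q))
        = (2 * k) • ∑ l ∈ Finset.range (k - 1), T (P ^ (2 * (k - l - 1)) * (P ^ l * Q) ^ 2)
          + k • T ((P ^ (k - 1) * Q) ^ 2) := by
      rw [hD]
      congr 1
      · rw [Finset.smul_sum]
        refine Finset.sum_congr rfl fun j hj => ?_
        rw [Finset.mem_range] at hj
        rw [show k - 1 + (k - 1) - j = 2 * k - 2 - j from by omega,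
          show 2 * k - 1 - (2 * k - 2 - j) = j + 1 from by omega,
          show 2 * k - 2 - (2 * k - 2 - j) = j from by omega,
          T_csym T hcyc P Q j (2 * k - 2 - j), ← add_nsmul,
          show 2 * k - 1 - j + (j + 1) = 2 * k from by omega,
          hterm j (by omega)]
      · rw [show 2 * k - 1 - (k - 1) = k from by omega,
          show 2 * k - 2 - (k - 1) = k - 1 from by omega]
        congr 1
        refine congrArg T ?_
        rw [pow_two]
    rw [nk_expand P Q hQ (2 * k), map_add, map_add, T_nkA T hcyc P Q (2 * k),
      T_nkB T hcyc P Q (2 * k), hsum]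
    abel
  · -- odd case
    have hA2 := T_nkA T hcyc P Q (2 * k + 1)
    rw [show 2 * k + 1 - 1 = 2 * k from by omega] at hA2
    have hD2 := sum_double k
      (fun j => (2 * k - j) • T (P ^ (2 * k - 1 - j) * Q * (P ^ j * Q)))
    have h0 : ∑ j ∈ Finset.range (2 * k + 1 - 1),
        (2 * k + 1 - 1 - j) • T (P ^ (2 * k + 1 - 2 - j) * Q * (P ^ j * Q))
        = ∑ j ∈ Finset.range (k + k), (2 * k - j) • T (P ^ (2 * k - 1 - j) * Q * (P ^ j * Q)) := by
      refine Finset.sum_congr (by rw [show 2 * k + 1 - 1 = k + k from by omega]) fun j hj => ?_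
      rw [Finset.mem_range] at hj
      rw [show 2 * k + 1 - 1 - j = 2 * k - j from by omega,
        show 2 * k + 1 - 2 - j = 2 * k - 1 - j from by omega]
    have hsum2 : ∑ j ∈ Finset.range (2 * k + 1 - 1),
        (2 * k + 1 - 1 - j) • T (P ^ (2 * k + 1 - 2 - j) * Q * (P ^ j * Q))
        = (2 * k + 1) • ∑ l ∈ Finset.range k, T (P ^ (2 * (k - l) - 1) * (P ^ l * Q) ^ 2) := by
      rw [h0, hD2, Finset.smul_sum]
      refine Finset.sum_congr rfl fun j hj => ?_
      rw [Finset.mem_range] at hj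
      rw [show k + k - 1 - j = 2 * k - 1 - j from by omega,
        show 2 * k - (2 * k - 1 - j) = j + 1 from by omega,
        show 2 * k - 1 - (2 * k - 1 - j) = j from by omega,
        T_csym T hcyc P Q j (2 * k - 1 - j), ← add_nsmul,
        show 2 * k - j + (j + 1) = 2 * k + 1 from by omega,
        hterm2 j hj]
    rw [nk_expand P Q hQ (2 * k + 1), map_add, map_add, hA2,
      T_nkB T hcyc P Q (2 * k + 1), hsum2]
end

section
/- Let θ(x) = log(1+x)/(1+x) and let ϑ be a local inverse of θ at 0 (ϑ(0) = 0, ϑ(θ(x)) = x near 0, θ(ϑ(y)) = y for y near 0). Then for all real c and all real γ such that γ·e^c lies in the domain of ϑ (a sufficiently small neighborhood of 0), the number X := e^c · (1 + ϑ(γ e^c)) satisfies X > 0 and log X − γ·X = c. -/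
/-- Scalar version of Lemma 7: if `ϑ` is a local inverse of
`θ(x) = log(1+x)/(1+x)` at `0`, then for all real `c, γ` with `γ e^c` in the
domain of `ϑ`, the number `X := e^c (1 + ϑ(γ e^c))` is positive and solves the
modified compensation equation `log X - γ X = c`. -/
theorem modified_compensation_solution
    (ϑ : ℝ → ℝ) (ε : ℝ) (hε : 0 < ε)
    (hϑ0 : ϑ 0 = 0)
    (hdom : ∀ y : ℝ, |y| < ε → -1 < ϑ y)
    (hright : ∀ y : ℝ, |y| < ε → Real.log (1 + ϑ y) / (1 + ϑ y) = y)
    (hleft : ∃ δ > (0 : ℝ), ∀ x : ℝ, |x| < δ →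
      ϑ (Real.log (1 + x) / (1 + x)) = x) :
    ∀ c γ : ℝ, |γ * Real.exp c| < ε →
      0 < Real.exp c * (1 + ϑ (γ * Real.exp c)) ∧
      Real.log (Real.exp c * (1 + ϑ (γ * Real.exp c)))
        - γ * (Real.exp c * (1 + ϑ (γ * Real.exp c))) = c := by
  intro c γ h
  set u := γ * Real.exp c with hu
  have hpos : 0 < 1 + ϑ u := by linarith [hdom u h]
  have hX : 0 < Real.exp c * (1 + ϑ u) := mul_pos (Real.exp_pos c) hpos
  refine ⟨hX, ?_⟩
  have hr := hright u h
  have hlog : Real.log (1 + ϑ u) = u * (1 + ϑ u) := by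
    field_simp at hr
    linarith [hr]
  rw [Real.log_mul (Real.exp_pos c).ne' hpos.ne', Real.log_exp, hlog]
  ring_nf
  rw [hu]; ring
end
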